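/- Let u ∈ W^{1,2}_loc(Ω, ℂ) on an open set Ω ⊆ ℂ, let Γ ⊆ CO(2) be a compact set of conformal matrices, and let K ≥ 1. Then Du(z) ∈ ℰ_Γ := {X : ‖A − X‖² ≤ K det(A − X) for all A ∈ Γ} if and only if |∂_z̄ u(z)| ≤ ((K−1)/(K+1)) · dist(∂_z u(z), Γ'), where Γ' ⊆ ℂ is the set of complex numbers corresponding to Γ under the identification CO(2) ≅ ℂ. -/

import Mathlib

open Matrix Metric

/-- Operator (ℓ²→ℓ²) norm of a real 2×2 matrix. -/
noncomputable def opNorm (A : Matrix (Fin 2) (Fin 2) ℝ) : ℝ :=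
  ‖Matrix.toEuclideanCLM (𝕜 := ℝ) A‖

/-- The real 2×2 matrix corresponding, under the identification ℝ² ≅ ℂ, to the
real-linear map `z ↦ a₊ z + a₋ conj z`. -/
noncomputable def toMat (ap am : ℂ) : Matrix (Fin 2) (Fin 2) ℝ :=
  !![ap.re + am.re, -ap.im + am.im; ap.im + am.im, ap.re - am.re]

lemma norm_symm (x : Fin 2 → ℝ) :
    ‖(WithLp.equiv 2 (Fin 2 → ℝ)).symm x‖
      = ‖x 0 + x 1 * Complex.I‖ := by
  rw [EuclideanSpace.norm_eq, Complex.norm_def, Complex.normSq_apply]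
  simp [Fin.sum_univ_two]
  ring_nf

lemma mulVec_key (ap am : ℂ) (x : Fin 2 → ℝ) :
    ‖(Matrix.toEuclideanCLM (𝕜 := ℝ) (toMat ap am)) ((WithLp.equiv 2 (Fin 2 → ℝ)).symm x)‖
      = ‖ap * (x 0 + x 1 * Complex.I)
          + am * (starRingEnd ℂ) (x 0 + x 1 * Complex.I)‖ := by
  rw [show (WithLp.equiv 2 (Fin 2 → ℝ)).symm x = WithLp.toLp 2 x from rfl,
    Matrix.toEuclideanCLM_toLp, ← WithLp.equiv_symm_apply, norm_symm, Complex.norm_def, Complex.norm_def,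
    Complex.normSq_apply, Complex.normSq_apply]
  congr 1
  simp [toMat, Matrix.mulVec, dotProduct, Fin.sum_univ_two, Complex.add_re, Complex.add_im,
    Complex.mul_re, Complex.mul_im]
  ring

lemma opNorm_le' (ap am : ℂ) :
    opNorm (toMat ap am) ≤ ‖ap‖ + ‖am‖ := by
  apply ContinuousLinearMap.opNorm_le_bound _ (by positivity)
  intro v
  obtain ⟨x, rfl⟩ : ∃ x : Fin 2 → ℝ, (WithLp.equiv 2 (Fin 2 → ℝ)).symm x = v :=
    ⟨WithLp.equiv 2 (Fin 2 → ℝ) v, rfl⟩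
  rw [mulVec_key, norm_symm]
  set z := (x 0 : ℂ) + x 1 * Complex.I
  calc ‖ap * z + am * (starRingEnd ℂ) z‖
      ≤ ‖ap * z‖ + ‖am * (starRingEnd ℂ) z‖ := norm_add_le _ _
    _ = (‖ap‖ + ‖am‖) * ‖z‖ := by
        simp only [norm_mul, Complex.norm_conj]; ring

lemma exists_unit (ap am : ℂ) :
    ∃ z : ℂ, ‖z‖ = 1 ∧
      ‖ap * z + am * (starRingEnd ℂ) z‖ = ‖ap‖ + ‖am‖ := by
  by_cases h : am * (starRingEnd ℂ) ap = 0
  · rcases mul_eq_zero.mp h with h | h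
    · exact ⟨1, by simp, by simp [h]⟩
    · rw [map_eq_zero] at h
      exact ⟨1, by simp, by simp [h]⟩
  · set w := am * (starRingEnd ℂ) ap with hw
    have hap : ap ≠ 0 := fun h' => h (by simp [hw, h'])
    have ham : am ≠ 0 := fun h' => h (by simp [hw, h'])
    set r := ‖ap‖ with hr
    set s := ‖am‖ with hs
    have hr0 : 0 < r := by simpa [hr] using hap
    have hs0 : 0 < s := by simpa [hs] using ham
    have habsw : ‖w‖ = s * r := by
      simp only [hw, norm_mul, Complex.norm_conj]; rfl
    set φ : ℝ := w.arg / 2 with hφ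
    refine ⟨Complex.exp (φ * Complex.I), Complex.norm_exp_ofReal_mul_I φ, ?_⟩
    set z := Complex.exp (φ * Complex.I) with hzdef
    have h1 : z * (starRingEnd ℂ) z = 1 := by
      rw [Complex.mul_conj]
      norm_cast
      rw [Complex.normSq_eq_norm_sq, Complex.norm_exp_ofReal_mul_I]
      norm_num
    have hwne : ((‖w‖ : ℝ) : ℂ) ≠ 0 := by
      exact_mod_cast norm_ne_zero_iff.mpr h
    have hzz : z * z = w / (‖w‖ : ℂ) := by
      rw [hzdef, ← Complex.exp_add]
      have harg : (φ : ℂ) * Complex.I + φ * Complex.I = (w.arg : ℂ) * Complex.I := by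
        rw [hφ]; push_cast; ring
      rw [harg, eq_div_iff hwne, mul_comm]
      exact Complex.norm_mul_exp_arg_mul_I w
    have hkey : ap * z + am * (starRingEnd ℂ) z
        = (starRingEnd ℂ) z * (ap * (z * z) + am) := by
      linear_combination -(ap * z) * h1
    have hapconj : ap * (starRingEnd ℂ) ap = ((r : ℝ) : ℂ) ^ 2 := by
      rw [Complex.mul_conj, Complex.normSq_eq_norm_sq]
      push_cast
      ring
    have hsne : ((s : ℝ) : ℂ) ≠ 0 := by exact_mod_cast hs0.ne'
    have hrne : ((r : ℝ) : ℂ) ≠ 0 := by exact_mod_cast hr0.ne'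
    have hval : ap * (z * z) + am = am * (((r + s) / s : ℝ) : ℂ) := by
      rw [hzz, habsw, hw]
      push_cast
      field_simp
      linear_combination hapconj
    rw [hkey, norm_mul, hval, norm_mul, Complex.norm_real, Real.norm_eq_abs]
    have hcz1 : ‖(starRingEnd ℂ) z‖ = 1 := by
      rw [Complex.norm_conj, hzdef, Complex.norm_exp_ofReal_mul_I]
    rw [hcz1, one_mul, ← hs, abs_of_nonneg (by positivity)]
    field_simp

lemma opNorm_toMat (ap am : ℂ) :
    opNorm (toMat ap am) = ‖ap‖ + ‖am‖ := by
  refine le_antisymm (opNorm_le' ap am) ?_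
  obtain ⟨z, hz1, hz2⟩ := exists_unit ap am
  have h := mulVec_key ap am ![z.re, z.im]
  simp only [Matrix.cons_val_zero, Matrix.cons_val_one, Matrix.head_cons,
    Complex.re_add_im] at h
  have hnv : ‖(WithLp.equiv 2 (Fin 2 → ℝ)).symm ![z.re, z.im]‖ = 1 := by
    rw [norm_symm]
    simp only [Matrix.cons_val_zero, Matrix.cons_val_one, Matrix.head_cons,
      Complex.re_add_im]
    exact hz1
  calc ‖ap‖ + ‖am‖
      = ‖(Matrix.toEuclideanCLM (𝕜 := ℝ) (toMat ap am))
          ((WithLp.equiv 2 (Fin 2 → ℝ)).symm ![z.re, z.im])‖ := by rw [h, hz2]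
    _ ≤ opNorm (toMat ap am) * ‖(WithLp.equiv 2 (Fin 2 → ℝ)).symm ![z.re, z.im]‖ :=
        ContinuousLinearMap.le_opNorm _ _
    _ = opNorm (toMat ap am) := by rw [hnv, mul_one]

lemma det_toMat (ap am : ℂ) :
    (toMat ap am).det = ‖ap‖ ^ 2 - ‖am‖ ^ 2 := by
  rw [Complex.sq_norm, Complex.sq_norm, Complex.normSq_apply, Complex.normSq_apply]
  simp [toMat, Matrix.det_fin_two_of]
  ring

lemma sub_toMat (a dz dzb : ℂ) :
    toMat a 0 - toMat dz dzb = toMat (a - dz) (-dzb) := by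
  ext i j
  fin_cases i <;> fin_cases j <;>
    simp [toMat, Matrix.sub_apply] <;> ring

lemma quad_iff (K s t : ℝ) (hK : 1 ≤ K) (hs : 0 ≤ s) (ht : 0 ≤ t) :
    (s + t) ^ 2 ≤ K * (s ^ 2 - t ^ 2) ↔ t ≤ (K - 1) / (K + 1) * s := by
  have hK1 : (0:ℝ) < K + 1 := by linarith
  rw [div_mul_eq_mul_div, le_div_iff₀ hK1]
  constructor
  · intro hq
    rcases eq_or_lt_of_le (add_nonneg hs ht) with h0 | hpos
    · have hs0 : s = 0 := by linarith
      have ht0 : t = 0 := by linarith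
      rw [hs0, ht0]; simp
    · by_contra h'
      push_neg at h'
      nlinarith [mul_pos hpos (by linarith : (0:ℝ) < (K + 1) * t - (K - 1) * s)]
  · intro h'
    nlinarith [mul_nonneg (add_nonneg hs ht) (by linarith : (0:ℝ) ≤ K * (s - t) - (s + t))]

/-- Lemma 5.2 of the paper, at the level of pointwise matrices: `Du(z)`, with Wirtinger
coordinates `(∂_z u, ∂_z̄ u) = (dz, dzb)`, lies in the `K`-quasiconformal envelope of a
compact set `Γ ⊆ CO(2)` (identified with `Γ' ⊆ ℂ`) iff
`|∂_z̄ u| ≤ (K-1)/(K+1) · dist(∂_z u, Γ')`. -/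
theorem stmt18 (K : ℝ) (hK : 1 ≤ K) (Γ' : Set ℂ) (hΓc : IsCompact Γ')
    (hΓne : Γ'.Nonempty) (dz dzb : ℂ) :
    (∀ a ∈ Γ', opNorm (toMat a 0 - toMat dz dzb) ^ 2 ≤
        K * (toMat a 0 - toMat dz dzb).det) ↔
      ‖dzb‖ ≤ (K - 1) / (K + 1) * infDist dz Γ' := by
  have hrw : ∀ a : ℂ, (opNorm (toMat a 0 - toMat dz dzb) ^ 2 ≤
      K * (toMat a 0 - toMat dz dzb).det ↔
      ‖dzb‖ ≤ (K - 1) / (K + 1) * ‖a - dz‖) := by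
    intro a
    rw [sub_toMat, opNorm_toMat, det_toMat, norm_neg]
    exact quad_iff K (‖a - dz‖) (‖dzb‖) hK
      (norm_nonneg _) (norm_nonneg _)
  have hc0 : 0 ≤ (K - 1) / (K + 1) :=
    div_nonneg (by linarith) (by linarith)
  constructor
  · intro H
    obtain ⟨a0, ha0, hd⟩ := hΓc.exists_infDist_eq_dist hΓne dz
    rw [hd]
    have := (hrw a0).mp (H a0 ha0)
    rwa [Complex.dist_eq, norm_sub_rev]
  · intro H a ha
    refine (hrw a).mpr (H.trans ?_)
    apply mul_le_mul_of_nonneg_left _ hc0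
    rw [norm_sub_rev, ← Complex.dist_eq]
    exact infDist_le_dist_of_mem ha
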